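/- (Entropy of the estimator under covariance mismatch.) In the setup of the context, suppose ‖Σ̂ − Σ‖ ≤ (δ/4^{K+1})·χ for some constant δ ∈ (0,1). Then for every k = 1,…,K the matrix Σ_k has rank s, and, writing Vol(Σ_k) for the square root of the product of the s positive eigenvalues of Σ_k, the posterior entropy H_k := ln[(2πe)^{s/2} Vol(Σ_k)] satisfies H_k ≤ (s/2)·{ ln[2πe·tr(Σ)] − Σ_{j=1}^{k} ln(1/f_j) }, where f_j = 1 − ((1−δ)/s)·(β_j λ̂_j/(β_j λ̂_j + σ²)) ∈ (0,1). -/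

import Mathlib

open MeasureTheory ProbabilityTheory Matrix BigOperators

/-- Spectral (ℓ²-operator) norm of a real square matrix. -/
noncomputable def specNorm {n : ℕ} (A : Matrix (Fin n) (Fin n) ℝ) : ℝ :=
  ‖LinearMap.toContinuousLinearMap (Matrix.toEuclideanLin A)‖

/-- The standard Gaussian measure on `ℝⁿ` (iid `N(0,1)` coordinates). -/
noncomputable def stdGaussianPi (n : ℕ) : Measure (Fin n → ℝ) :=
  Measure.pi fun _ => gaussianReal 0 1

/-- The square root of a positive semidefinite matrix, as `Matrix.PosSemidef.sqrt` was defined in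
the older Mathlib: `U * diagonal (√ ∘ eigenvalues) * Uᴴ` with `U` the eigenvector unitary. -/
noncomputable def Matrix.PosSemidef.sqrt {n : ℕ} {S : Matrix (Fin n) (Fin n) ℝ}
    (hS : S.PosSemidef) : Matrix (Fin n) (Fin n) ℝ :=
  (hS.1.eigenvectorUnitary : Matrix (Fin n) (Fin n) ℝ) *
    diagonal ((↑) ∘ (√·) ∘ hS.1.eigenvalues) *
    (star hS.1.eigenvectorUnitary : Matrix (Fin n) (Fin n) ℝ)

/-- The multivariate Gaussian measure `N(μ, S)` on `ℝⁿ`, defined as the pushforward of the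
standard Gaussian under the affine map `z ↦ μ + S^{1/2} z`. -/
noncomputable def multiGaussian {n : ℕ} (μ : Fin n → ℝ) (S : Matrix (Fin n) (Fin n) ℝ)
    (hS : S.PosSemidef) : Measure (Fin n → ℝ) :=
  (stdGaussianPi n).map fun z => μ + hS.sqrt.mulVec z

/-- The chi-squared distribution with `n` degrees of freedom, i.e. the Gamma distribution
with shape `n/2` and rate `1/2`. -/
noncomputable def chiSqMeasure (n : ℕ) : Measure ℝ := gammaMeasure ((n : ℝ) / 2) (1 / 2)

namespace SpecHelper
variable {n : ℕ}

lemma specNorm_nonneg (A : Matrix (Fin n) (Fin n) ℝ) : 0 ≤ specNorm A := norm_nonneg _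

lemma dot_eq_inner (v w : Fin n → ℝ) :
    v ⬝ᵥ w = (inner ℝ ((WithLp.equiv 2 (Fin n → ℝ)).symm v) ((WithLp.equiv 2 (Fin n → ℝ)).symm w) : ℝ) := by
  simp [PiLp.inner_apply, dotProduct, RCLike.inner_apply, mul_comm]

lemma abs_dot_mulVec_le (A : Matrix (Fin n) (Fin n) ℝ) (v : Fin n → ℝ) :
    |v ⬝ᵥ A *ᵥ v| ≤ specNorm A * (v ⬝ᵥ v) := by
  set v' := (WithLp.equiv 2 (Fin n → ℝ)).symm v
  have h1 : v ⬝ᵥ A *ᵥ v = (inner ℝ v' ((LinearMap.toContinuousLinearMap (Matrix.toEuclideanLin A)) v') : ℝ) := by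
    rw [dot_eq_inner]
    congr 1
  rw [h1]
  calc |(inner ℝ v' ((LinearMap.toContinuousLinearMap (Matrix.toEuclideanLin A)) v') : ℝ)|
      ≤ ‖v'‖ * ‖(LinearMap.toContinuousLinearMap (Matrix.toEuclideanLin A)) v'‖ := abs_real_inner_le_norm _ _
    _ ≤ ‖v'‖ * (specNorm A * ‖v'‖) := by
        gcongr
        exact ContinuousLinearMap.le_opNorm _ _
    _ = specNorm A * (v ⬝ᵥ v) := by
        rw [dot_eq_inner, real_inner_self_eq_norm_mul_norm]
        ring

lemma dot_mulVec_self_le (A : Matrix (Fin n) (Fin n) ℝ) (v : Fin n → ℝ) :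
    (A *ᵥ v) ⬝ᵥ (A *ᵥ v) ≤ specNorm A ^ 2 * (v ⬝ᵥ v) := by
  set v' := (WithLp.equiv 2 (Fin n → ℝ)).symm v
  have h1 : (A *ᵥ v) ⬝ᵥ (A *ᵥ v) = ‖(LinearMap.toContinuousLinearMap (Matrix.toEuclideanLin A)) v'‖ ^ 2 := by
    rw [dot_eq_inner, ← real_inner_self_eq_norm_sq]
    congr 1
  rw [h1]
  have h2 : ‖(LinearMap.toContinuousLinearMap (Matrix.toEuclideanLin A)) v'‖ ≤ specNorm A * ‖v'‖ :=
    ContinuousLinearMap.le_opNorm _ _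
  have h3 : v ⬝ᵥ v = ‖v'‖ ^ 2 := by rw [dot_eq_inner, ← real_inner_self_eq_norm_sq]
  calc ‖(LinearMap.toContinuousLinearMap (Matrix.toEuclideanLin A)) v'‖ ^ 2
      ≤ (specNorm A * ‖v'‖) ^ 2 := by
        apply pow_le_pow_left₀ (norm_nonneg _) h2
    _ = specNorm A ^ 2 * (v ⬝ᵥ v) := by rw [h3]; ring

lemma specNorm_add_le (A B : Matrix (Fin n) (Fin n) ℝ) :
    specNorm (A + B) ≤ specNorm A + specNorm B := by
  unfold specNorm
  rw [map_add, map_add]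
  exact norm_add_le _ _

lemma specNorm_smul (c : ℝ) (A : Matrix (Fin n) (Fin n) ℝ) :
    specNorm (c • A) = |c| * specNorm A := by
  unfold specNorm
  rw [_root_.map_smul, _root_.map_smul]
  exact norm_smul c (LinearMap.toContinuousLinearMap (Matrix.toEuclideanLin A))

lemma norm_symm_eq (v : Fin n → ℝ) : ‖(WithLp.equiv 2 (Fin n → ℝ)).symm v‖ = Real.sqrt (v ⬝ᵥ v) := by
  rw [dot_eq_inner, real_inner_self_eq_norm_mul_norm, Real.sqrt_mul_self (norm_nonneg _)]

lemma vecMulVec_mulVec' (x y z : Fin n → ℝ) : (vecMulVec x y) *ᵥ z = (y ⬝ᵥ z) • x := by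
  ext i
  simp only [mulVec, vecMulVec_apply, dotProduct, Pi.smul_apply, smul_eq_mul, Finset.sum_mul]
  exact Finset.sum_congr rfl fun j _ => by ring

lemma specNorm_vecMulVec_le {x y : Fin n → ℝ} {a b : ℝ} (ha : 0 ≤ a) (hb : 0 ≤ b)
    (hx : x ⬝ᵥ x ≤ a ^ 2) (hy : y ⬝ᵥ y ≤ b ^ 2) :
    specNorm (vecMulVec x y) ≤ a * b := by
  have hxn : ‖(WithLp.equiv 2 (Fin n → ℝ)).symm x‖ ≤ a := by
    rw [norm_symm_eq]
    rw [show a = Real.sqrt (a ^ 2) by rw [Real.sqrt_sq ha]]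
    exact Real.sqrt_le_sqrt hx
  have hyn : ‖(WithLp.equiv 2 (Fin n → ℝ)).symm y‖ ≤ b := by
    rw [norm_symm_eq]
    rw [show b = Real.sqrt (b ^ 2) by rw [Real.sqrt_sq hb]]
    exact Real.sqrt_le_sqrt hy
  unfold specNorm
  apply ContinuousLinearMap.opNorm_le_bound _ (by positivity)
  intro z
  have hinner : (inner ℝ ((WithLp.equiv 2 (Fin n → ℝ)).symm y) z : ℝ) = y ⬝ᵥ (WithLp.equiv 2 (Fin n → ℝ)) z := by
    rw [dot_eq_inner]
    congr 1
  have hmv : Matrix.toEuclideanLin (vecMulVec x y) z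
      = (inner ℝ ((WithLp.equiv 2 (Fin n → ℝ)).symm y) z : ℝ) • (WithLp.equiv 2 (Fin n → ℝ)).symm x := by
    apply (WithLp.equiv 2 (Fin n → ℝ)).injective
    rw [WithLp.equiv_apply, WithLp.equiv_apply, ofLp_toEuclideanLin_apply, vecMulVec_mulVec', hinner, WithLp.ofLp_smul,
      WithLp.equiv_apply, WithLp.equiv_symm_apply, WithLp.ofLp_toLp]
  simp only [LinearMap.coe_toContinuousLinearMap', hmv]
  rw [norm_smul, Real.norm_eq_abs]
  calc |(inner ℝ ((WithLp.equiv 2 (Fin n → ℝ)).symm y) z : ℝ)| * ‖(WithLp.equiv 2 (Fin n → ℝ)).symm x‖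
      ≤ (‖(WithLp.equiv 2 (Fin n → ℝ)).symm y‖ * ‖z‖) * ‖(WithLp.equiv 2 (Fin n → ℝ)).symm x‖ := by
        gcongr; exact abs_real_inner_le_norm _ _
    _ ≤ (b * ‖z‖) * a := by gcongr
    _ = a * b * ‖z‖ := by ring

lemma dot_sq_le (x y : Fin n → ℝ) : (x ⬝ᵥ y) ^ 2 ≤ (x ⬝ᵥ x) * (y ⬝ᵥ y) := by
  have := real_inner_mul_inner_self_le (F := EuclideanSpace ℝ (Fin n))
    ((WithLp.equiv 2 (Fin n → ℝ)).symm x) ((WithLp.equiv 2 (Fin n → ℝ)).symm y)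
  have hx : ∀ u v : Fin n → ℝ, u ⬝ᵥ v = (inner ℝ ((WithLp.equiv 2 (Fin n → ℝ)).symm u) ((WithLp.equiv 2 (Fin n → ℝ)).symm v) : ℝ) := by
    intro u v
    simp [PiLp.inner_apply, dotProduct, RCLike.inner_apply, mul_comm]
  rw [hx x y, hx x x, hx y y, sq]
  simpa using this

lemma psd_cs {A : Matrix (Fin n) (Fin n) ℝ} (hA : A.PosSemidef) (x y : Fin n → ℝ) :
    (x ⬝ᵥ A *ᵥ y) ^ 2 ≤ (x ⬝ᵥ A *ᵥ x) * (y ⬝ᵥ A *ᵥ y) := by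
  have hsym : y ⬝ᵥ A *ᵥ x = x ⬝ᵥ A *ᵥ y := by
    have hT : Aᵀ = A := by
      have := hA.1
      rwa [Matrix.IsHermitian, conjTranspose_eq_transpose_of_trivial] at this
    rw [dotProduct_mulVec, ← mulVec_transpose, hT, dotProduct_comm]
  have hq : ∀ c : ℝ, 0 ≤ (y ⬝ᵥ A *ᵥ y) * (c * c) + 2 * (x ⬝ᵥ A *ᵥ y) * c + (x ⬝ᵥ A *ᵥ x) := by
    intro c
    have h := hA.dotProduct_mulVec_nonneg (x + c • y)
    have hs : star (x + c • y) = x + c • y := funext fun i => by simp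
    rw [hs] at h
    simp only [mulVec_add, mulVec_smul, add_dotProduct, dotProduct_add, smul_dotProduct,
      dotProduct_smul, smul_eq_mul, hsym] at h
    nlinarith [h]
  have := discrim_le_zero hq
  unfold discrim at this
  nlinarith [this]

lemma trace_vecMulVec (x y : Fin n → ℝ) : (vecMulVec x y).trace = x ⬝ᵥ y := by
  simp [Matrix.trace, Matrix.diag, vecMulVec_apply, dotProduct]

lemma trace_eq_sum_eigenvalues {A : Matrix (Fin n) (Fin n) ℝ} (hA : A.IsHermitian) :
    A.trace = ∑ i, hA.eigenvalues i := by
  simpa using hA.trace_eq_sum_eigenvalues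

lemma rank_eq_of_ker {A B : Matrix (Fin n) (Fin n) ℝ}
    (h : ∀ x, A *ᵥ x = 0 ↔ B *ᵥ x = 0) : A.rank = B.rank := by
  have hker : LinearMap.ker A.mulVecLin = LinearMap.ker B.mulVecLin := by
    ext x
    simp only [LinearMap.mem_ker, mulVecLin_apply]
    exact h x
  have hA := LinearMap.finrank_range_add_finrank_ker A.mulVecLin
  have hB := LinearMap.finrank_range_add_finrank_ker B.mulVecLin
  rw [hker] at hA
  unfold Matrix.rank
  omega

lemma eigvec_dot_self {A : Matrix (Fin n) (Fin n) ℝ} (hA : A.IsHermitian) (i : Fin n) :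
    ⇑(hA.eigenvectorBasis i) ⬝ᵥ ⇑(hA.eigenvectorBasis i) = 1 := by
  have h := hA.eigenvectorBasis.orthonormal.1 i
  have : (⇑(hA.eigenvectorBasis i) ⬝ᵥ ⇑(hA.eigenvectorBasis i) : ℝ)
      = (inner ℝ (hA.eigenvectorBasis i) (hA.eigenvectorBasis i) : ℝ) := by
    simp only [PiLp.inner_apply, RCLike.inner_apply, conj_trivial, dotProduct]
  rw [this, real_inner_self_eq_norm_mul_norm, h]
  norm_num

lemma eigval_eq_quadform {A : Matrix (Fin n) (Fin n) ℝ} (hA : A.IsHermitian) (i : Fin n) :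
    hA.eigenvalues i = ⇑(hA.eigenvectorBasis i) ⬝ᵥ A *ᵥ ⇑(hA.eigenvectorBasis i) := by
  rw [hA.mulVec_eigenvectorBasis]
  rw [dotProduct_smul, smul_eq_mul, eigvec_dot_self hA i, mul_one]

lemma rank_eq_card_filter {A : Matrix (Fin n) (Fin n) ℝ} (hA : A.IsHermitian) :
    A.rank = (Finset.univ.filter (fun i => hA.eigenvalues i ≠ 0)).card := by
  rw [hA.rank_eq_card_non_zero_eigs]
  rw [Fintype.card_subtype]

lemma vecMulVec_smul_smul (c d : ℝ) (x y : Fin n → ℝ) :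
    vecMulVec (c • x) (d • y) = (c * d) • vecMulVec x y := by
  ext i j
  simp only [vecMulVec_apply, Pi.smul_apply, smul_eq_mul, Matrix.smul_apply]
  ring

lemma scalar_facts {σ χ lam b : ℝ} (hσ : 0 < σ) (hχ : 0 < χ) (hcl : χ < lam)
    (hb : b = σ ^ 2 * (1 / χ - 1 / lam)) :
    0 < b ∧ b * χ * lam = σ ^ 2 * (lam - χ) ∧ b * lam ^ 2 = (lam - χ) * (b * lam + σ ^ 2)
      ∧ b * χ ≤ σ ^ 2 := by
  have hlm : 0 < lam := hχ.trans hcl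
  have h1 : (0:ℝ) < 1 / χ - 1 / lam := by
    have := one_div_lt_one_div_of_lt hχ hcl
    linarith
  have hbpos : 0 < b := by rw [hb]; positivity
  have h2 : b * χ * lam = σ ^ 2 * (lam - χ) := by
    rw [hb]; field_simp
  refine ⟨hbpos, h2, by linear_combination h2, ?_⟩
  nlinarith [mul_pos hbpos (mul_pos hχ hχ)]

lemma norm_step {σ χ lam b ε t : ℝ} (hσ : 0 < σ) (hχ : 0 < χ) (hcl : χ < lam)
    (hb : b = σ ^ 2 * (1 / χ - 1 / lam)) (hε0 : 0 ≤ ε) (hεχ : ε ≤ χ)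
    (ht : |lam - t| ≤ ε) :
    ε + |(b * t + σ ^ 2)⁻¹ * b * lam ^ 2 - (b * lam + σ ^ 2)⁻¹ * (b * lam ^ 2)|
      + (b * t + σ ^ 2)⁻¹ * b * lam * ε + (b * t + σ ^ 2)⁻¹ * b * lam * ε
      + (b * t + σ ^ 2)⁻¹ * b * ε ^ 2 ≤ 4 * ε := by
  obtain ⟨hbpos, h2, hkey, hσβχ⟩ := scalar_facts hσ hχ hcl hb
  have hlm : 0 < lam := hχ.trans hcl
  have htlb : lam - ε ≤ t := by
    have := abs_le.mp ht
    linarith [this.1, this.2]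
  have htpos : 0 < t := by linarith
  have hD1 : 0 < b * t + σ ^ 2 := by positivity
  have hD2 : 0 < b * lam + σ ^ 2 := by positivity
  have hdiff : (b * t + σ ^ 2)⁻¹ * b * lam ^ 2 - (b * lam + σ ^ 2)⁻¹ * (b * lam ^ 2)
      = (b ^ 2 * lam ^ 2 / ((b * t + σ ^ 2) * (b * lam + σ ^ 2))) * (lam - t) := by
    field_simp
    ring
  have habs : |(b * t + σ ^ 2)⁻¹ * b * lam ^ 2 - (b * lam + σ ^ 2)⁻¹ * (b * lam ^ 2)|
      ≤ (b ^ 2 * lam ^ 2 / ((b * t + σ ^ 2) * (b * lam + σ ^ 2))) * ε := by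
    rw [hdiff, abs_mul, abs_of_nonneg (by positivity)]
    gcongr
  have hterm1 : (b ^ 2 * lam ^ 2 / ((b * t + σ ^ 2) * (b * lam + σ ^ 2))) * ε
      = b * (lam - χ) * ε / (b * t + σ ^ 2) := by
    rw [div_mul_eq_mul_div, div_eq_div_iff (by positivity) (by positivity)]
    linear_combination (ε * (b * t + σ ^ 2) * b) * hkey
  have hrest : b * (lam - χ) * ε / (b * t + σ ^ 2)
      + (b * t + σ ^ 2)⁻¹ * b * lam * ε + (b * t + σ ^ 2)⁻¹ * b * lam * ε
      + (b * t + σ ^ 2)⁻¹ * b * ε ^ 2 ≤ 3 * ε := by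
    have : b * (lam - χ) * ε / (b * t + σ ^ 2)
      + (b * t + σ ^ 2)⁻¹ * b * lam * ε + (b * t + σ ^ 2)⁻¹ * b * lam * ε
      + (b * t + σ ^ 2)⁻¹ * b * ε ^ 2
      = (b * (lam - χ) * ε + b * lam * ε + b * lam * ε + b * ε ^ 2) / (b * t + σ ^ 2) := by
      field_simp
    rw [this, div_le_iff₀ hD1]
    nlinarith [mul_nonneg (mul_nonneg hbpos.le hε0) (sub_nonneg.mpr hεχ),
      mul_nonneg (mul_nonneg hbpos.le hε0) hε0, mul_le_mul_of_nonneg_left htlb (mul_nonneg hbpos.le hε0),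
      mul_nonneg hε0 (sub_nonneg.mpr hσβχ)]
  linarith [habs, hterm1.le, hrest]

set_option maxHeartbeats 1000000 in
lemma trace_step {σ χ lam b ε t δ tr : ℝ} {s : ℕ} (hσ : 0 < σ) (hχ : 0 < χ) (hcl : χ < lam)
    (hb : b = σ ^ 2 * (1 / χ - 1 / lam)) (hε0 : 0 ≤ ε) (hεχ : ε ≤ δ * χ / 16)
    (hδ0 : 0 < δ) (hδ1 : δ < 1) (hs : 1 ≤ s)
    (ht : |lam - t| ≤ ε) (htr0 : 0 ≤ tr) (htrle : tr ≤ s * (lam + ε)) :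
    ((1 - δ) / s) * (b * lam / (b * lam + σ ^ 2)) * tr ≤ b * t ^ 2 / (b * t + σ ^ 2) := by
  have hlm : 0 < lam := hχ.trans hcl
  have hbpos : 0 < b := by
    have h1 : (0:ℝ) < 1 / χ - 1 / lam := by
      have := one_div_lt_one_div_of_lt hχ hcl
      linarith
    rw [hb]; positivity
  have hepsdlam : ε ≤ δ * lam / 16 := by
    have : δ * χ ≤ δ * lam := by nlinarith
    linarith
  have htlb : lam - ε ≤ t := by have := abs_le.mp ht; linarith [this.1, this.2]
  have hepslam : ε ≤ lam / 16 := by nlinarith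
  have htpos : 0 < t := by linarith
  have hD1 : 0 < b * t + σ ^ 2 := by positivity
  have hD2 : 0 < b * lam + σ ^ 2 := by positivity
  have hsR : (1:ℝ) ≤ (s:ℝ) := by exact_mod_cast hs
  have hspos : (0:ℝ) < s := by linarith
  have hB : (1 - δ) * (lam + ε) ^ 2 ≤ (lam - ε) ^ 2 := by
    nlinarith [sq_nonneg ε, sq_nonneg (lam + ε), mul_nonneg hδ0.le (sq_nonneg (lam - ε)),
      mul_nonneg hδ0.le (mul_nonneg hε0 hlm.le)]
  have hA : (1 - δ) * (lam * (lam + ε)) ≤ (lam - ε) ^ 2 := by nlinarith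
  have hd : (1 - δ) * (lam + ε) ≤ t := by
    have h1 : (1 - δ) * (lam + ε) * lam ≤ (lam - ε) * lam := by nlinarith
    have h2 : (1 - δ) * (lam + ε) ≤ lam - ε := by
      have := mul_le_mul_of_nonneg_right h1 (le_of_lt (inv_pos.mpr hlm))
      rw [mul_assoc, mul_inv_cancel₀ hlm.ne', mul_one, mul_assoc, mul_inv_cancel₀ hlm.ne', mul_one] at this
      exact this
    linarith
  have ht2 : (lam - ε) ^ 2 ≤ t ^ 2 := by nlinarith
  have step1 : ((1 - δ) / s) * (b * lam / (b * lam + σ ^ 2)) * tr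
      ≤ (1 - δ) * (lam + ε) * (b * lam / (b * lam + σ ^ 2)) := by
    have hcoef : 0 ≤ ((1 - δ) / s) * (b * lam / (b * lam + σ ^ 2)) := by
      have h1δ : (0:ℝ) ≤ 1 - δ := by linarith
      positivity
    calc ((1 - δ) / s) * (b * lam / (b * lam + σ ^ 2)) * tr
        ≤ ((1 - δ) / s) * (b * lam / (b * lam + σ ^ 2)) * (s * (lam + ε)) :=
          mul_le_mul_of_nonneg_left htrle hcoef
      _ = (1 - δ) * (lam + ε) * (b * lam / (b * lam + σ ^ 2)) := by
          field_simp
  have step2 : (1 - δ) * (lam + ε) * (b * lam / (b * lam + σ ^ 2)) ≤ b * t ^ 2 / (b * t + σ ^ 2) := by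
    rw [show (1 - δ) * (lam + ε) * (b * lam / (b * lam + σ ^ 2))
        = ((1 - δ) * (lam + ε) * (b * lam)) / (b * lam + σ ^ 2) by ring,
      div_le_div_iff₀ hD2 hD1]
    have e1 : (1 - δ) * (lam + ε) * (b * lam) * (b * t + σ ^ 2)
        = (1 - δ) * (lam + ε) * lam * t * b ^ 2 + (1 - δ) * (lam + ε) * lam * b * σ ^ 2 := by ring
    have e2 : b * t ^ 2 * (b * lam + σ ^ 2) = lam * t ^ 2 * b ^ 2 + t ^ 2 * b * σ ^ 2 := by ring
    rw [e1, e2]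
    have p1 : (1 - δ) * (lam + ε) * lam * t * b ^ 2 ≤ lam * t ^ 2 * b ^ 2 := by
      have : (1 - δ) * (lam + ε) * t ≤ t * t := by nlinarith
      nlinarith [sq_nonneg b, mul_pos hlm (mul_pos hbpos hbpos)]
    have p2 : (1 - δ) * (lam + ε) * lam * b * σ ^ 2 ≤ t ^ 2 * b * σ ^ 2 := by
      have : (1 - δ) * (lam + ε) * lam ≤ t ^ 2 := by nlinarith
      nlinarith [mul_pos hbpos (mul_pos hσ hσ)]
    linarith
  linarith

end SpecHelper

set_option maxHeartbeats 8000000 in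
/-- Entropy of the estimator under covariance mismatch. If the initial
mismatch satisfies `‖Σ̂ − Σ‖ ≤ (δ/4^{K+1})·χ`, then each true posterior covariance `Σ_k`
has rank `s`, each `f_j` lies in `(0,1)`, and the posterior entropy
`ln[(2πe)^{s/2}·Vol(Σ_k)]` (with `Vol` the square root of the product of the positive
eigenvalues) is at most `(s/2)·(ln(2πe·tr Σ) − ∑_{j≤k} ln(1/f_j))`. -/
theorem stmt4 {n s K : ℕ} (hs : 1 ≤ s)
    (σ χ δ : ℝ) (hσ : 0 < σ) (hχ : 0 < χ) (hδ : δ ∈ Set.Ioo (0 : ℝ) 1)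
    (S Shat : Matrix (Fin n) (Fin n) ℝ) (hS : S.PosSemidef) (hShat : Shat.PosSemidef)
    (hrank : S.rank = s)
    -- algorithm data: at step k+1 we use the largest eigenpair of `Shatseq k`
    (lamhat : ℕ → ℝ) (uhat : ℕ → Fin n → ℝ) (β : ℕ → ℝ) (a : ℕ → Fin n → ℝ)
    (Shatseq Sseq : ℕ → Matrix (Fin n) (Fin n) ℝ)
    (hShat0 : Shatseq 0 = Shat) (hS0 : Sseq 0 = S)
    (hunit : ∀ k, uhat k ⬝ᵥ uhat k = 1)
    (heig : ∀ k (_ : k < K),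
      (Shatseq k).mulVec (uhat (k + 1)) = lamhat (k + 1) • uhat (k + 1))
    (hmax : ∀ k (_ : k < K), ∀ v : Fin n → ℝ,
      v ⬝ᵥ (Shatseq k).mulVec v ≤ lamhat (k + 1) * (v ⬝ᵥ v))
    (hlamχ : ∀ k (_ : k < K), χ < lamhat (k + 1))
    (hβ : ∀ k (_ : k < K), β (k + 1) = σ ^ 2 * (1 / χ - 1 / lamhat (k + 1)))
    (ha : ∀ k, a k = Real.sqrt (β k) • uhat k)
    (hShatrec : ∀ k (_ : k < K), Shatseq (k + 1) = Shatseq k -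
      (β (k + 1) * lamhat (k + 1) + σ ^ 2)⁻¹ •
        Matrix.vecMulVec ((Shatseq k).mulVec (a (k + 1))) ((a (k + 1)) ᵥ* Shatseq k))
    (hSrec : ∀ k (_ : k < K), Sseq (k + 1) = Sseq k -
      (a (k + 1) ⬝ᵥ (Sseq k).mulVec (a (k + 1)) + σ ^ 2)⁻¹ •
        Matrix.vecMulVec ((Sseq k).mulVec (a (k + 1))) ((a (k + 1)) ᵥ* Sseq k))
    -- small initial mismatch
    (hmismatch : specNorm (Shat - S) ≤ (δ / 4 ^ (K + 1)) * χ)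
    -- the contraction factors
    (f : ℕ → ℝ)
    (hf : ∀ j, f j = 1 - ((1 - δ) / s) *
      (β j * lamhat j / (β j * lamhat j + σ ^ 2))) :
    (∀ j, 1 ≤ j → j ≤ K → f j ∈ Set.Ioo (0 : ℝ) 1) ∧
    ∀ k, 1 ≤ k → k ≤ K →
      (Sseq k).rank = s ∧
      ∀ (hk : (Sseq k).IsHermitian),
        Real.log ((2 * Real.pi * Real.exp 1) ^ ((s : ℝ) / 2) *
            Real.sqrt (∏ i ∈ Finset.univ.filter (fun i => hk.eigenvalues i ≠ 0),
              hk.eigenvalues i))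
          ≤ ((s : ℝ) / 2) *
            (Real.log (2 * Real.pi * Real.exp 1 * S.trace)
              - ∑ j ∈ Finset.Icc 1 k, Real.log (1 / f j)) := by
  classical
  obtain ⟨hδ0, hδ1⟩ := hδ
  -- the contraction factors are in (0,1)
  have fmem : ∀ j, 1 ≤ j → j ≤ K → f j ∈ Set.Ioo (0 : ℝ) 1 := by
    intro j hj1 hjK
    obtain ⟨m, rfl⟩ : ∃ m, j = m + 1 := ⟨j - 1, (Nat.succ_pred_eq_of_pos hj1).symm⟩
    have hmK : m < K := hjK
    have hcl := hlamχ m hmK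
    obtain ⟨hbpos, -, -, -⟩ := SpecHelper.scalar_facts hσ hχ hcl (hβ m hmK)
    have hlm : 0 < lamhat (m + 1) := hχ.trans hcl
    have hD2 : 0 < β (m + 1) * lamhat (m + 1) + σ ^ 2 := by positivity
    have hsR : (1:ℝ) ≤ (s:ℝ) := by exact_mod_cast hs
    have hratio0 : 0 < β (m + 1) * lamhat (m + 1) / (β (m + 1) * lamhat (m + 1) + σ ^ 2) := by
      positivity
    have hratio1 : β (m + 1) * lamhat (m + 1) / (β (m + 1) * lamhat (m + 1) + σ ^ 2) < 1 := by
      rw [div_lt_one hD2]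
      nlinarith
    have hx0 : 0 < ((1 - δ) / s) * (β (m + 1) * lamhat (m + 1) / (β (m + 1) * lamhat (m + 1) + σ ^ 2)) := by
      have h1δ : (0:ℝ) < 1 - δ := by linarith
      positivity
    have hx1 : ((1 - δ) / s) * (β (m + 1) * lamhat (m + 1) / (β (m + 1) * lamhat (m + 1) + σ ^ 2)) < 1 := by
      have h1 : (1 - δ) / s ≤ 1 := by
        rw [div_le_one (by linarith)]
        linarith
      calc ((1 - δ) / s) * (β (m + 1) * lamhat (m + 1) / (β (m + 1) * lamhat (m + 1) + σ ^ 2))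
          ≤ 1 * (β (m + 1) * lamhat (m + 1) / (β (m + 1) * lamhat (m + 1) + σ ^ 2)) := by
            apply mul_le_mul_of_nonneg_right h1 hratio0.le
        _ < 1 := by rw [one_mul]; exact hratio1
    rw [hf (m + 1)]
    exact ⟨by linarith, by linarith⟩
  refine ⟨fmem, ?_⟩
  -- the main invariant
  have main : ∀ k, k ≤ K → (Shatseq k).IsHermitian ∧ (Sseq k).PosSemidef ∧
      (∀ x, Sseq k *ᵥ x = 0 ↔ S *ᵥ x = 0) ∧
      specNorm (Shatseq k - Sseq k) ≤ 4 ^ k * (δ / 4 ^ (K + 1) * χ) ∧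
      (Sseq k).trace ≤ (∏ j ∈ Finset.Icc 1 k, f j) * S.trace := by
    intro k
    induction k with
    | zero =>
      intro _
      refine ⟨hShat0 ▸ hShat.1, hS0 ▸ hS, fun x => by rw [hS0], ?_, ?_⟩
      · rw [hShat0, hS0, pow_zero, one_mul]
        exact hmismatch
      · simp [hS0]
    | succ k ih =>
      intro hk1
      have hkK : k < K := hk1
      obtain ⟨hHer, hPSD, hker, hnorm, htr⟩ := ih (Nat.le_of_succ_le hk1)
      set A := Shatseq k with hA
      set M := Sseq k with hM
      set E := A - M with hE
      set u := uhat (k + 1) with hu'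
      set lam := lamhat (k + 1) with hlam'
      set b := β (k + 1) with hb'
      set t := u ⬝ᵥ M *ᵥ u with ht'
      set Eu := E *ᵥ u with hEu'
      set ε := (4:ℝ) ^ k * (δ / 4 ^ (K + 1) * χ) with hε'
      have hcl : χ < lam := hlamχ k hkK
      have hlm : 0 < lam := hχ.trans hcl
      obtain ⟨hbpos, hbcl, hkey, hsbc⟩ := SpecHelper.scalar_facts hσ hχ hcl (hβ k hkK)
      have hεnn : 0 ≤ ε := by positivity
      -- ε ≤ δ χ / 16 since k + 2 ≤ K + 1
      have hε16 : ε ≤ δ * χ / 16 := by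
        have hpow : (4:ℝ) ^ k * 16 ≤ 4 ^ (K + 1) := by
          calc (4:ℝ) ^ k * 16 = 4 ^ (k + 2) := by ring
            _ ≤ 4 ^ (K + 1) := by
                apply pow_le_pow_right₀ (by norm_num)
                omega
        rw [hε', show (4:ℝ) ^ k * (δ / 4 ^ (K + 1) * χ) = δ * χ * ((4:ℝ) ^ k / 4 ^ (K + 1)) by ring]
        have h2 : (4:ℝ) ^ k / 4 ^ (K + 1) ≤ 1 / 16 := by
          rw [div_le_div_iff₀ (by positivity) (by norm_num)]
          linarith
        calc δ * χ * ((4:ℝ) ^ k / 4 ^ (K + 1)) ≤ δ * χ * (1 / 16) := by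
              apply mul_le_mul_of_nonneg_left h2 (by positivity)
          _ = δ * χ / 16 := by ring
      have hεχ : ε ≤ χ := by nlinarith
      have hup : u ⬝ᵥ u = 1 := hunit (k + 1)
      have hAu : A *ᵥ u = lam • u := heig k hkK
      have hMsym : Mᵀ = M := by
        have := hPSD.1
        rwa [Matrix.IsHermitian, conjTranspose_eq_transpose_of_trivial] at this
      have hAsym : Aᵀ = A := by
        have := hHer
        rwa [Matrix.IsHermitian, conjTranspose_eq_transpose_of_trivial] at this
      have hEnorm : specNorm E ≤ ε := hnorm
      have huAu : u ⬝ᵥ A *ᵥ u = lam := by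
        rw [hAu, dotProduct_smul, smul_eq_mul, hup, mul_one]
      have hMu : M *ᵥ u = lam • u - Eu := by
        rw [hEu', hE, sub_mulVec, hAu]
        abel
      have he : |u ⬝ᵥ E *ᵥ u| ≤ ε := by
        calc |u ⬝ᵥ E *ᵥ u| ≤ specNorm E * (u ⬝ᵥ u) := SpecHelper.abs_dot_mulVec_le E u
          _ = specNorm E := by rw [hup, mul_one]
          _ ≤ ε := hEnorm
      have ht_abs : |lam - t| ≤ ε := by
        have : lam - t = u ⬝ᵥ E *ᵥ u := by
          rw [ht', hE, sub_mulVec, dotProduct_sub, huAu]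
        rw [this]
        exact he
      have htlb : lam - ε ≤ t := by have := abs_le.mp ht_abs; linarith [this.1, this.2]
      have htpos : 0 < t := by linarith
      have hD1 : 0 < b * t + σ ^ 2 := by positivity
      have hD2 : 0 < b * lam + σ ^ 2 := by positivity
      have hEu2 : Eu ⬝ᵥ Eu ≤ ε ^ 2 := by
        calc Eu ⬝ᵥ Eu ≤ specNorm E ^ 2 * (u ⬝ᵥ u) := SpecHelper.dot_mulVec_self_le E u
          _ = specNorm E ^ 2 := by rw [hup, mul_one]
          _ ≤ ε ^ 2 := by
              apply pow_le_pow_left₀ (SpecHelper.specNorm_nonneg E) hEnorm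
      have hsqb : Real.sqrt b * Real.sqrt b = b := Real.mul_self_sqrt hbpos.le
      -- rewrite the recursions
      have hak : a (k + 1) = Real.sqrt b • u := ha (k + 1)
      have hvecMulA : a (k + 1) ᵥ* A = Real.sqrt b • (A *ᵥ u) := by
        rw [hak, smul_vecMul]
        congr 1
        conv_lhs => rw [← hAsym]
        rw [vecMul_transpose]
      have hvecMulM : a (k + 1) ᵥ* M = Real.sqrt b • (M *ᵥ u) := by
        rw [hak, smul_vecMul]
        congr 1
        conv_lhs => rw [← hMsym]
        rw [vecMul_transpose]
      have hmulA : A *ᵥ a (k + 1) = Real.sqrt b • (A *ᵥ u) := by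
        rw [hak, mulVec_smul]
      have hmulM : M *ᵥ a (k + 1) = Real.sqrt b • (M *ᵥ u) := by
        rw [hak, mulVec_smul]
      have haMa : a (k + 1) ⬝ᵥ M *ᵥ a (k + 1) = b * t := by
        rw [hmulM, ha (k + 1), smul_dotProduct, dotProduct_smul, smul_eq_mul, smul_eq_mul,
          ← mul_assoc, hsqb, ht']
      have hrecS : Sseq (k + 1) = M -
          (a (k + 1) ⬝ᵥ M *ᵥ a (k + 1) + σ ^ 2)⁻¹ •
            Matrix.vecMulVec (M *ᵥ a (k + 1)) (a (k + 1) ᵥ* M) := hSrec k hkK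
      have hrecShat : Shatseq (k + 1) = A -
          (b * lam + σ ^ 2)⁻¹ •
            Matrix.vecMulVec (A *ᵥ a (k + 1)) (a (k + 1) ᵥ* A) := hShatrec k hkK
      have hSrec' : Sseq (k + 1) = M - ((b * t + σ ^ 2)⁻¹ * b) • vecMulVec (M *ᵥ u) (M *ᵥ u) := by
        rw [hrecS, haMa, hmulM, hvecMulM, SpecHelper.vecMulVec_smul_smul, hsqb, smul_smul]
      have hShatrec' : Shatseq (k + 1)
          = A - ((b * lam + σ ^ 2)⁻¹ * (b * lam ^ 2)) • vecMulVec u u := by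
        rw [hrecShat, hmulA, hvecMulA, hAu, SpecHelper.vecMulVec_smul_smul]
        rw [smul_smul, SpecHelper.vecMulVec_smul_smul]
        rw [smul_smul]
        congr 2
        rw [hsqb]
        ring
      -- the difference identity
      have hE'id : Shatseq (k + 1) - Sseq (k + 1) =
          E + ((b * t + σ ^ 2)⁻¹ * b * lam ^ 2 - (b * lam + σ ^ 2)⁻¹ * (b * lam ^ 2)) • vecMulVec u u
            + (-((b * t + σ ^ 2)⁻¹ * b * lam)) • vecMulVec u Eu
            + (-((b * t + σ ^ 2)⁻¹ * b * lam)) • vecMulVec Eu u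
            + ((b * t + σ ^ 2)⁻¹ * b) • vecMulVec Eu Eu := by
        rw [hShatrec', hSrec', hMu]
        ext i j
        simp only [Matrix.sub_apply, Matrix.add_apply, Matrix.smul_apply, vecMulVec_apply,
          Pi.sub_apply, Pi.smul_apply, smul_eq_mul, hE]
        ring
      -- norm propagation
      have hnorm' : specNorm (Shatseq (k + 1) - Sseq (k + 1)) ≤ 4 ^ (k + 1) * (δ / 4 ^ (K + 1) * χ) := by
        have b1 : specNorm (vecMulVec u u) ≤ 1 * 1 :=
          SpecHelper.specNorm_vecMulVec_le zero_le_one zero_le_one (by rw [hup]; norm_num)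
            (by rw [hup]; norm_num)
        have b2 : specNorm (vecMulVec u Eu) ≤ 1 * ε :=
          SpecHelper.specNorm_vecMulVec_le zero_le_one hεnn (by rw [hup]; norm_num) hEu2
        have b3 : specNorm (vecMulVec Eu u) ≤ ε * 1 :=
          SpecHelper.specNorm_vecMulVec_le hεnn zero_le_one hEu2 (by rw [hup]; norm_num)
        have b4 : specNorm (vecMulVec Eu Eu) ≤ ε * ε :=
          SpecHelper.specNorm_vecMulVec_le hεnn hεnn hEu2 hEu2
        have hc2lam : |(-((b * t + σ ^ 2)⁻¹ * b * lam))| = (b * t + σ ^ 2)⁻¹ * b * lam := by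
          rw [abs_neg]; exact abs_of_nonneg (by positivity)
        have hc2abs : |(b * t + σ ^ 2)⁻¹ * b| = (b * t + σ ^ 2)⁻¹ * b := abs_of_nonneg (by positivity)
        have hns := SpecHelper.norm_step hσ hχ hcl (hβ k hkK) hεnn hεχ ht_abs
        have hgoal_eq : (4:ℝ) ^ (k + 1) * (δ / 4 ^ (K + 1) * χ) = 4 * ε := by
          rw [hε']; ring
        rw [hE'id, hgoal_eq]
        set Δ := (b * t + σ ^ 2)⁻¹ * b * lam ^ 2 - (b * lam + σ ^ 2)⁻¹ * (b * lam ^ 2) with hΔ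
        calc specNorm (E + Δ • vecMulVec u u + (-((b * t + σ ^ 2)⁻¹ * b * lam)) • vecMulVec u Eu
              + (-((b * t + σ ^ 2)⁻¹ * b * lam)) • vecMulVec Eu u
              + ((b * t + σ ^ 2)⁻¹ * b) • vecMulVec Eu Eu)
            ≤ specNorm (E + Δ • vecMulVec u u + (-((b * t + σ ^ 2)⁻¹ * b * lam)) • vecMulVec u Eu
              + (-((b * t + σ ^ 2)⁻¹ * b * lam)) • vecMulVec Eu u)
              + specNorm (((b * t + σ ^ 2)⁻¹ * b) • vecMulVec Eu Eu) :=
              SpecHelper.specNorm_add_le _ _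
          _ ≤ specNorm (E + Δ • vecMulVec u u + (-((b * t + σ ^ 2)⁻¹ * b * lam)) • vecMulVec u Eu)
              + specNorm ((-((b * t + σ ^ 2)⁻¹ * b * lam)) • vecMulVec Eu u)
              + specNorm (((b * t + σ ^ 2)⁻¹ * b) • vecMulVec Eu Eu) := by
              have := SpecHelper.specNorm_add_le
                (E + Δ • vecMulVec u u + (-((b * t + σ ^ 2)⁻¹ * b * lam)) • vecMulVec u Eu)
                ((-((b * t + σ ^ 2)⁻¹ * b * lam)) • vecMulVec Eu u)
              linarith
          _ ≤ specNorm (E + Δ • vecMulVec u u) + specNorm ((-((b * t + σ ^ 2)⁻¹ * b * lam)) • vecMulVec u Eu)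
              + specNorm ((-((b * t + σ ^ 2)⁻¹ * b * lam)) • vecMulVec Eu u)
              + specNorm (((b * t + σ ^ 2)⁻¹ * b) • vecMulVec Eu Eu) := by
              have := SpecHelper.specNorm_add_le (E + Δ • vecMulVec u u)
                ((-((b * t + σ ^ 2)⁻¹ * b * lam)) • vecMulVec u Eu)
              linarith
          _ ≤ specNorm E + specNorm (Δ • vecMulVec u u)
              + specNorm ((-((b * t + σ ^ 2)⁻¹ * b * lam)) • vecMulVec u Eu)
              + specNorm ((-((b * t + σ ^ 2)⁻¹ * b * lam)) • vecMulVec Eu u)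
              + specNorm (((b * t + σ ^ 2)⁻¹ * b) • vecMulVec Eu Eu) := by
              have := SpecHelper.specNorm_add_le E (Δ • vecMulVec u u)
              linarith
          _ = specNorm E + |Δ| * specNorm (vecMulVec u u)
              + ((b * t + σ ^ 2)⁻¹ * b * lam) * specNorm (vecMulVec u Eu)
              + ((b * t + σ ^ 2)⁻¹ * b * lam) * specNorm (vecMulVec Eu u)
              + ((b * t + σ ^ 2)⁻¹ * b) * specNorm (vecMulVec Eu Eu) := by
              rw [SpecHelper.specNorm_smul, SpecHelper.specNorm_smul, SpecHelper.specNorm_smul,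
                SpecHelper.specNorm_smul, hc2lam, hc2abs]
          _ ≤ ε + |Δ| * (1 * 1) + ((b * t + σ ^ 2)⁻¹ * b * lam) * (1 * ε)
              + ((b * t + σ ^ 2)⁻¹ * b * lam) * (ε * 1) + ((b * t + σ ^ 2)⁻¹ * b) * (ε * ε) := by
              have m1 := mul_le_mul_of_nonneg_left b1 (abs_nonneg Δ)
              have m2 := mul_le_mul_of_nonneg_left b2 (show (0:ℝ) ≤ (b * t + σ ^ 2)⁻¹ * b * lam by positivity)
              have m3 := mul_le_mul_of_nonneg_left b3 (show (0:ℝ) ≤ (b * t + σ ^ 2)⁻¹ * b * lam by positivity)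
              have m4 := mul_le_mul_of_nonneg_left b4 (show (0:ℝ) ≤ (b * t + σ ^ 2)⁻¹ * b by positivity)
              linarith
          _ = ε + |Δ| + (b * t + σ ^ 2)⁻¹ * b * lam * ε + (b * t + σ ^ 2)⁻¹ * b * lam * ε
              + (b * t + σ ^ 2)⁻¹ * b * ε ^ 2 := by ring
          _ ≤ 4 * ε := hns
      -- quadratic form and kernel facts for the update
      have hstar : ∀ x : Fin n → ℝ, star x = x := fun x => funext fun i => by simp
      set w := M *ᵥ u with hw
      have huM : u ᵥ* M = w := by
        conv_lhs => rw [← hMsym]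
        rw [vecMul_transpose, hw]
      have hwx : ∀ x, w ⬝ᵥ x = u ⬝ᵥ M *ᵥ x := fun x => by
        rw [dotProduct_mulVec, huM]
      have hq : ∀ x, x ⬝ᵥ Sseq (k + 1) *ᵥ x
          = x ⬝ᵥ M *ᵥ x - ((b * t + σ ^ 2)⁻¹ * b) * (w ⬝ᵥ x) ^ 2 := by
        intro x
        rw [hSrec', sub_mulVec, smul_mulVec, SpecHelper.vecMulVec_mulVec',
          dotProduct_sub, dotProduct_smul, dotProduct_smul, smul_eq_mul, smul_eq_mul,
          dotProduct_comm x w]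
        ring
      have hqnn : ∀ x, 0 ≤ x ⬝ᵥ M *ᵥ x := fun x => by
        have := hPSD.dotProduct_mulVec_nonneg x
        rwa [hstar x] at this
      have hCS : ∀ x, (w ⬝ᵥ x) ^ 2 ≤ t * (x ⬝ᵥ M *ᵥ x) := by
        intro x
        rw [hwx x]
        calc (u ⬝ᵥ M *ᵥ x) ^ 2 ≤ (u ⬝ᵥ M *ᵥ u) * (x ⬝ᵥ M *ᵥ x) := SpecHelper.psd_cs hPSD u x
          _ = t * (x ⬝ᵥ M *ᵥ x) := by rw [ht']
      have hlower : ∀ x, σ ^ 2 / (b * t + σ ^ 2) * (x ⬝ᵥ M *ᵥ x) ≤ x ⬝ᵥ Sseq (k + 1) *ᵥ x := by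
        intro x
        rw [hq x]
        have h1 : ((b * t + σ ^ 2)⁻¹ * b) * ((w ⬝ᵥ x) ^ 2)
            ≤ ((b * t + σ ^ 2)⁻¹ * b) * (t * (x ⬝ᵥ M *ᵥ x)) :=
          mul_le_mul_of_nonneg_left (hCS x) (by positivity)
        have h3 : σ ^ 2 / (b * t + σ ^ 2) * (x ⬝ᵥ M *ᵥ x)
            = x ⬝ᵥ M *ᵥ x - ((b * t + σ ^ 2)⁻¹ * b) * (t * (x ⬝ᵥ M *ᵥ x)) := by
          field_simp
          ring
        linarith
      have hPSD' : (Sseq (k + 1)).PosSemidef := by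
        refine Matrix.PosSemidef.of_dotProduct_mulVec_nonneg ?_ ?_
        · show (Sseq (k + 1))ᴴ = Sseq (k + 1)
          rw [conjTranspose_eq_transpose_of_trivial, hSrec', transpose_sub, transpose_smul, hMsym]
          congr 1
          ext i j
          simp only [Matrix.smul_apply, Matrix.transpose_apply, Matrix.vecMulVec_apply, smul_eq_mul]
          ring
        · intro x
          rw [hstar x]
          have h1 := hlower x
          have h2 : 0 ≤ σ ^ 2 / (b * t + σ ^ 2) * (x ⬝ᵥ M *ᵥ x) :=
            mul_nonneg (by positivity) (hqnn x)
          linarith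
      have hker' : ∀ x, Sseq (k + 1) *ᵥ x = 0 ↔ S *ᵥ x = 0 := by
        intro x
        rw [← hker x]
        constructor
        · intro h0
          have h1 : x ⬝ᵥ Sseq (k + 1) *ᵥ x = 0 := by rw [h0, dotProduct_zero]
          have h2 : x ⬝ᵥ M *ᵥ x = 0 := by
            by_contra hne
            have hqpos : 0 < x ⬝ᵥ M *ᵥ x := lt_of_le_of_ne (hqnn x) (Ne.symm hne)
            have hc : 0 < σ ^ 2 / (b * t + σ ^ 2) := by positivity
            nlinarith [hlower x]
          have h3 := hPSD.dotProduct_mulVec_zero_iff x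
          rw [hstar x] at h3
          exact h3.mp h2
        · intro h0
          have hwx0 : w ⬝ᵥ x = 0 := by rw [hwx x, h0, dotProduct_zero]
          rw [hSrec', sub_mulVec, smul_mulVec, SpecHelper.vecMulVec_mulVec', hwx0,
            zero_smul, smul_zero, h0, sub_zero]
      -- trace step
      have hfk : f (k + 1) = 1 - ((1 - δ) / s) * (b * lam / (b * lam + σ ^ 2)) := hf (k + 1)
      have htrM_0 : 0 ≤ M.trace := by
        rw [SpecHelper.trace_eq_sum_eigenvalues hPSD.1]
        exact Finset.sum_nonneg fun i _ => hPSD.eigenvalues_nonneg i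
      have hμle : ∀ i, hPSD.1.eigenvalues i ≤ lam + ε := by
        intro i
        have hv1 : ⇑(hPSD.1.eigenvectorBasis i) ⬝ᵥ ⇑(hPSD.1.eigenvectorBasis i) = 1 :=
          SpecHelper.eigvec_dot_self hPSD.1 i
        have hval := SpecHelper.eigval_eq_quadform hPSD.1 i
        have hAv : ⇑(hPSD.1.eigenvectorBasis i) ⬝ᵥ A *ᵥ ⇑(hPSD.1.eigenvectorBasis i)
            ≤ lam * (⇑(hPSD.1.eigenvectorBasis i) ⬝ᵥ ⇑(hPSD.1.eigenvectorBasis i)) :=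
          hmax k hkK _
        have hEvabs : |⇑(hPSD.1.eigenvectorBasis i) ⬝ᵥ E *ᵥ ⇑(hPSD.1.eigenvectorBasis i)| ≤ ε := by
          calc |⇑(hPSD.1.eigenvectorBasis i) ⬝ᵥ E *ᵥ ⇑(hPSD.1.eigenvectorBasis i)|
              ≤ specNorm E * (⇑(hPSD.1.eigenvectorBasis i) ⬝ᵥ ⇑(hPSD.1.eigenvectorBasis i)) :=
                SpecHelper.abs_dot_mulVec_le E _
            _ = specNorm E := by rw [hv1, mul_one]
            _ ≤ ε := hEnorm
        have hEv := (abs_le.mp hEvabs).1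
        have hsplit : ⇑(hPSD.1.eigenvectorBasis i) ⬝ᵥ E *ᵥ ⇑(hPSD.1.eigenvectorBasis i)
            = ⇑(hPSD.1.eigenvectorBasis i) ⬝ᵥ A *ᵥ ⇑(hPSD.1.eigenvectorBasis i)
              - ⇑(hPSD.1.eigenvectorBasis i) ⬝ᵥ M *ᵥ ⇑(hPSD.1.eigenvectorBasis i) := by
          rw [hE, sub_mulVec, dotProduct_sub]
        rw [hv1, mul_one] at hAv
        rw [hval]
        linarith
      have hcardM : (Finset.univ.filter (fun i => hPSD.1.eigenvalues i ≠ 0)).card = s := by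
        rw [← SpecHelper.rank_eq_card_filter hPSD.1, SpecHelper.rank_eq_of_ker hker, hrank]
      have htrM_le : M.trace ≤ s * (lam + ε) := by
        rw [SpecHelper.trace_eq_sum_eigenvalues hPSD.1]
        rw [← Finset.sum_filter_ne_zero Finset.univ]
        calc ∑ i ∈ Finset.univ.filter (fun i => hPSD.1.eigenvalues i ≠ 0), hPSD.1.eigenvalues i
            ≤ (Finset.univ.filter (fun i => hPSD.1.eigenvalues i ≠ 0)).card • (lam + ε) :=
              Finset.sum_le_card_nsmul _ _ _ (fun i _ => hμle i)
          _ = s * (lam + ε) := by rw [hcardM, nsmul_eq_mul]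
      have hts := SpecHelper.trace_step hσ hχ hcl (hβ k hkK)
        hεnn hε16 hδ0 hδ1 hs ht_abs htrM_0 htrM_le
      have htr_step : (Sseq (k + 1)).trace ≤ f (k + 1) * M.trace := by
        have h1 : (Sseq (k + 1)).trace = M.trace - ((b * t + σ ^ 2)⁻¹ * b) * (w ⬝ᵥ w) := by
          rw [hSrec', trace_sub, trace_smul, SpecHelper.trace_vecMulVec, smul_eq_mul]
        have hww : t ^ 2 ≤ w ⬝ᵥ w := by
          have h2 := SpecHelper.dot_sq_le u w
          rw [hup, one_mul] at h2
          have h3 : t = u ⬝ᵥ w := by rw [ht', hw]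
          rw [h3]
          exact h2
        have h3 : b * t ^ 2 / (b * t + σ ^ 2) ≤ ((b * t + σ ^ 2)⁻¹ * b) * (w ⬝ᵥ w) := by
          have h4 : b * t ^ 2 / (b * t + σ ^ 2) = ((b * t + σ ^ 2)⁻¹ * b) * t ^ 2 := by
            field_simp
          rw [h4]
          exact mul_le_mul_of_nonneg_left hww (by positivity)
        have h5 : (1 - (1 - δ) / (s:ℝ) * (b * lam / (b * lam + σ ^ 2))) * M.trace
            = M.trace - ((1 - δ) / (s:ℝ) * (b * lam / (b * lam + σ ^ 2))) * M.trace := by ring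
        rw [hfk, h1, h5]
        linarith
      have hfk1mem : f (k + 1) ∈ Set.Ioo (0:ℝ) 1 := fmem (k + 1) (by omega) hk1
      have htr' : (Sseq (k + 1)).trace ≤ (∏ j ∈ Finset.Icc 1 (k + 1), f j) * S.trace := by
        rw [Finset.prod_Icc_succ_top (by omega : 1 ≤ k + 1)]
        calc (Sseq (k + 1)).trace ≤ f (k + 1) * M.trace := htr_step
          _ ≤ f (k + 1) * ((∏ j ∈ Finset.Icc 1 k, f j) * S.trace) :=
              mul_le_mul_of_nonneg_left htr hfk1mem.1.le
          _ = (∏ j ∈ Finset.Icc 1 k, f j) * f (k + 1) * S.trace := by ring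
      -- Hermitian of Shatseq (k+1)
      have hHer' : (Shatseq (k + 1)).IsHermitian := by
        show (Shatseq (k + 1))ᴴ = Shatseq (k + 1)
        rw [conjTranspose_eq_transpose_of_trivial, hShatrec', transpose_sub, transpose_smul, hAsym]
        congr 1
        ext i j
        simp only [Matrix.smul_apply, Matrix.transpose_apply, Matrix.vecMulVec_apply, smul_eq_mul]
        ring
      exact ⟨hHer', hPSD', hker', hnorm', htr'⟩
  -- final assembly
  intro k hk1 hkK
  obtain ⟨hHer, hPSD, hker, hnorm, htr⟩ := main k hkK
  have hrankk : (Sseq k).rank = s := by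
    rw [SpecHelper.rank_eq_of_ker hker, hrank]
  refine ⟨hrankk, ?_⟩
  intro hk
  have hFpos : 0 < ∏ j ∈ Finset.Icc 1 k, f j :=
    Finset.prod_pos fun j hj =>
      (fmem j (Finset.mem_Icc.mp hj).1 (le_trans (Finset.mem_Icc.mp hj).2 hkK)).1
  have htrS_pos : 0 < S.trace := by
    rw [SpecHelper.trace_eq_sum_eigenvalues hS.1]
    have h0 : 0 ≤ ∑ i, hS.1.eigenvalues i :=
      Finset.sum_nonneg fun i _ => hS.eigenvalues_nonneg i
    rcases h0.lt_or_eq with hlt | heq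
    · exact hlt
    · exfalso
      have hall := (Finset.sum_eq_zero_iff_of_nonneg
        (fun i _ => hS.eigenvalues_nonneg i)).mp heq.symm
      have hempty : Finset.univ.filter (fun i => hS.1.eigenvalues i ≠ 0) = ∅ :=
        Finset.filter_eq_empty_iff.mpr fun {i} _ => not_not.mpr (hall i (Finset.mem_univ i))
      have hr0 : S.rank = 0 := by
        rw [SpecHelper.rank_eq_card_filter hS.1, hempty, Finset.card_empty]
      omega
  have hTpos : 0 < (∏ j ∈ Finset.Icc 1 k, f j) * S.trace := mul_pos hFpos htrS_pos
  have hnn : ∀ i, 0 ≤ hk.eigenvalues i := fun i => hPSD.eigenvalues_nonneg i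
  have hcard : (Finset.univ.filter (fun i => hk.eigenvalues i ≠ 0)).card = s := by
    rw [← SpecHelper.rank_eq_card_filter hk, hrankk]
  have htrk0 : ∀ i, hk.eigenvalues i ≤ (Sseq k).trace := fun i => by
    rw [SpecHelper.trace_eq_sum_eigenvalues hk]
    exact Finset.single_le_sum (fun j _ => hnn j) (Finset.mem_univ i)
  have hPpos : 0 < ∏ i ∈ Finset.univ.filter (fun i => hk.eigenvalues i ≠ 0), hk.eigenvalues i :=
    Finset.prod_pos fun i hi =>
      lt_of_le_of_ne (hnn i) (Ne.symm (Finset.mem_filter.mp hi).2)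
  have hPle : (∏ i ∈ Finset.univ.filter (fun i => hk.eigenvalues i ≠ 0), hk.eigenvalues i)
      ≤ ((∏ j ∈ Finset.Icc 1 k, f j) * S.trace) ^ s := by
    calc (∏ i ∈ Finset.univ.filter (fun i => hk.eigenvalues i ≠ 0), hk.eigenvalues i)
        ≤ ∏ _i ∈ Finset.univ.filter (fun i => hk.eigenvalues i ≠ 0),
            ((∏ j ∈ Finset.Icc 1 k, f j) * S.trace) :=
          Finset.prod_le_prod (fun i _ => hnn i) (fun i _ => le_trans (htrk0 i) htr)
      _ = ((∏ j ∈ Finset.Icc 1 k, f j) * S.trace) ^ s := by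
          rw [Finset.prod_const, hcard]
  have h2πe : (0:ℝ) < 2 * Real.pi * Real.exp 1 := by positivity
  have hlogsum : ∑ j ∈ Finset.Icc 1 k, Real.log (1 / f j)
      = - Real.log (∏ j ∈ Finset.Icc 1 k, f j) := by
    rw [Real.log_prod (fun j hj => ne_of_gt
      (fmem j (Finset.mem_Icc.mp hj).1 (le_trans (Finset.mem_Icc.mp hj).2 hkK)).1),
      ← Finset.sum_neg_distrib]
    exact Finset.sum_congr rfl fun j _ => by rw [one_div, Real.log_inv]
  have key : Real.log (∏ i ∈ Finset.univ.filter (fun i => hk.eigenvalues i ≠ 0), hk.eigenvalues i)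
      ≤ (s:ℝ) * (Real.log (∏ j ∈ Finset.Icc 1 k, f j) + Real.log S.trace) := by
    have h1 : Real.log (∏ i ∈ Finset.univ.filter (fun i => hk.eigenvalues i ≠ 0), hk.eigenvalues i)
        ≤ Real.log (((∏ j ∈ Finset.Icc 1 k, f j) * S.trace) ^ s) :=
      Real.log_le_log hPpos hPle
    rwa [Real.log_pow, Real.log_mul hFpos.ne' htrS_pos.ne'] at h1
  rw [Real.log_mul (ne_of_gt (Real.rpow_pos_of_pos h2πe _)) (ne_of_gt (Real.sqrt_pos.mpr hPpos)),
    Real.log_rpow h2πe, Real.log_sqrt hPpos.le, hlogsum,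
    Real.log_mul (by positivity) htrS_pos.ne']
  -- goal : (s/2) * log(2πe) + log P / 2 ≤ (s/2) * (log(2πe) + log trS - (- log F))
  nlinarith [key]
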